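/- arXiv:1511.00544 — 5 statements merged into one kernel-verified Lean document; each statement's English description precedes it below -/
import Mathlib

section
/- Define K_DB(w) = ξ + G⁻¹((w−c)/w) and K_WSD(w) = ξ + G⁻¹((s−w)/s), for c < w < s. Then with w* = √(s·c): if w < w* then K_WSD(w) > K_DB(w); if w > w* then K_DB(w) > K_WSD(w); and if w = w* then K_DB(w) = K_WSD(w). -/
open Set

/-- Comparison of the decentralized reservations K_DB(w) = ξ + G⁻¹((w−c)/w) and
K_WSD(w) = ξ + G⁻¹((s−w)/s) around the critical wholesale price w* = √(s·c). -/
theorem stmt2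
    (c w s ξ : ℝ) (Ginv : ℝ → ℝ)
    (hc : 0 < c) (hcw : c < w) (hws : w < s) (hξ : 0 ≤ ξ)
    (hGinv : StrictMonoOn Ginv (Icc 0 1)) :
    (w < Real.sqrt (s * c) → ξ + Ginv ((w - c) / w) < ξ + Ginv ((s - w) / s)) ∧
    (Real.sqrt (s * c) < w → ξ + Ginv ((s - w) / s) < ξ + Ginv ((w - c) / w)) ∧
    (w = Real.sqrt (s * c) → ξ + Ginv ((w - c) / w) = ξ + Ginv ((s - w) / s)) := by
  have hw : 0 < w := hc.trans hcw
  have hs : 0 < s := hw.trans hws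
  have h1 : (w - c) / w ∈ Icc (0:ℝ) 1 := by
    constructor
    · apply div_nonneg (by linarith) hw.le
    · rw [div_le_one hw]; linarith
  have h2 : (s - w) / s ∈ Icc (0:ℝ) 1 := by
    constructor
    · apply div_nonneg (by linarith) hs.le
    · rw [div_le_one hs]; linarith
  refine ⟨fun h => ?_, fun h => ?_, fun h => ?_⟩
  · have hsq : w ^ 2 < s * c := (Real.lt_sqrt hw.le).mp h
    have : (w - c) / w < (s - w) / s := by
      rw [div_lt_div_iff₀ hw hs]; nlinarith
    exact add_lt_add_right (hGinv h1 h2 this) ξ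
  · have hsq : s * c < w ^ 2 := (Real.sqrt_lt' hw).mp h
    have : (s - w) / s < (w - c) / w := by
      rw [div_lt_div_iff₀ hs hw]; nlinarith
    exact add_lt_add_right (hGinv h2 h1 this) ξ
  · have hsq : w ^ 2 = s * c := by
      rw [h, Real.sq_sqrt (by positivity)]
    have : (w - c) / w = (s - w) / s := by
      rw [div_eq_div_iff hw.ne' hs.ne']; nlinarith
    rw [this]
end

section
/- Sufficiency of IC: suppose k(ξ) is nondecreasing in ξ with k(ξ) ≥ ξ, and p(ξ) is chosen so that the indirect profit satisfies Π(ξ) = Π(ξ̲) + ∫_{ξ̲}^{ξ} [(r−s) + (s−w)·G(k(x)−x)] dx. Then for all ξ, ξ': U(k(ξ), p(ξ), ξ) ≥ U(k(ξ'), p(ξ'), ξ), i.e., the contract is incentive compatible. -/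
open MeasureTheory Set Filter

/-- Sufficiency: if k(·) is nondecreasing with k(ξ) ≥ ξ and the payments implement the
envelope profit formula, then the contract is incentive compatible. -/
theorem stmt11
    (r s w ξlo ξhi : ℝ) (G : ℝ → ℝ) (U : ℝ → ℝ → ℝ → ℝ) (k p Pi : ℝ → ℝ)
    (hw : 0 < w) (hws : w < s) (hsr : s < r) (hlo : 0 ≤ ξlo) (hlohi : ξlo ≤ ξhi)
    (hGcont : Continuous G) (hGmono : Monotone G) (hG0 : G 0 = 0)
    (hU : ∀ κ ρ ξ, U κ ρ ξ =
      (r - w) * min κ ξ + (s - w) * (∫ u in (0:ℝ)..(max (κ - ξ) 0), (1 - G u)) - ρ)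
    (hkmono : MonotoneOn k (Icc ξlo ξhi))
    (hk : ∀ ξ ∈ Icc ξlo ξhi, ξ ≤ k ξ)
    (hPi : ∀ ξ, Pi ξ = U (k ξ) (p ξ) ξ)
    (hP : ∀ ξ ∈ Icc ξlo ξhi,
      Pi ξ = Pi ξlo + ∫ x in ξlo..ξ, ((r - s) + (s - w) * G (k x - x))) :
    ∀ ξ ∈ Icc ξlo ξhi, ∀ ξ' ∈ Icc ξlo ξhi, U (k ξ') (p ξ') ξ ≤ U (k ξ) (p ξ) ξ := by
  -- clamped version of k, monotone on all of ℝ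
  set c : ℝ → ℝ := fun x => max ξlo (min x ξhi) with hc
  have hcmem : ∀ x, c x ∈ Icc ξlo ξhi := fun x =>
    ⟨le_max_left _ _, max_le hlohi (min_le_right _ _)⟩
  have hceq : ∀ x ∈ Icc ξlo ξhi, c x = x := by
    intro x hx
    simp only [hc]
    rw [min_eq_left hx.2, max_eq_right hx.1]
  set K : ℝ → ℝ := fun x => k (c x) with hKdef
  have hKmono : Monotone K := by
    intro x y hxy
    exact hkmono (hcmem x) (hcmem y) (max_le_max le_rfl (min_le_min hxy le_rfl))
  have hKeq : ∀ x ∈ Icc ξlo ξhi, K x = k x := fun x hx => by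
    simp only [hKdef]; rw [hceq x hx]
  set f : ℝ → ℝ := fun x => (r - s) + (s - w) * G (K x - x) with hf
  have hfmeas : Measurable f :=
    (measurable_const.add (((hGcont.measurable.comp
      (hKmono.measurable.sub measurable_id))).const_mul _))
  -- boundedness / integrability of f on subintervals of [ξlo, ξhi]
  have hfint : ∀ a b, a ∈ Icc ξlo ξhi → b ∈ Icc ξlo ξhi →
      IntervalIntegrable f volume a b := by
    intro a b ha hb
    set C : ℝ := |r - s| + (s - w) * max |G (k ξlo - ξhi)| |G (k ξhi)| with hC
    rw [intervalIntegrable_iff]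
    refine Integrable.mono' (g := fun _ => C)
      (integrableOn_const measure_Ioc_lt_top.ne)
      hfmeas.aestronglyMeasurable.restrict ?_
    refine ae_restrict_of_forall_mem measurableSet_uIoc ?_
    intro x hx
    have hx' : x ∈ Icc ξlo ξhi := by
      rcases hx with hx
      have h1 : min a b ≤ x := le_of_lt hx.1
      have h2 : x ≤ max a b := hx.2
      constructor
      · exact le_trans (le_min ha.1 hb.1) h1
      · exact le_trans h2 (max_le ha.2 hb.2)
    have hKx : K x = k x := hKeq x hx'
    have h1 : G (k ξlo - ξhi) ≤ G (K x - x) := by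
      apply hGmono
      have := hkmono (left_mem_Icc.2 hlohi) hx' hx'.1
      rw [hKx]; linarith [hx'.2]
    have h2 : G (K x - x) ≤ G (k ξhi) := by
      apply hGmono
      have := hkmono hx' (right_mem_Icc.2 hlohi) hx'.2
      have hx00 : (0:ℝ) ≤ x := le_trans hlo hx'.1
      rw [hKx]; linarith
    have hb1 : |G (K x - x)| ≤ max |G (k ξlo - ξhi)| |G (k ξhi)| :=
      abs_le_max_abs_abs h1 h2
    have hsw : (0:ℝ) < s - w := by linarith
    calc ‖f x‖ ≤ |r - s| + |(s - w) * G (K x - x)| := abs_add_le _ _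
      _ = |r - s| + (s - w) * |G (K x - x)| := by
          rw [abs_mul, abs_of_pos hsw]
      _ ≤ C := by
          rw [hC]
          have := mul_le_mul_of_nonneg_left hb1 hsw.le
          linarith
  -- rewrite the envelope formula with f
  have hPf : ∀ ζ, ζ ∈ Icc ξlo ξhi → Pi ζ = Pi ξlo + ∫ x in ξlo..ζ, f x := by
    intro ζ hζ
    rw [hP ζ hζ]
    congr 1
    apply intervalIntegral.integral_congr
    intro x hx
    have hx' : x ∈ Icc ξlo ξhi := by
      rcases hx with ⟨h1, h2⟩
      constructor
      · exact le_trans (le_min le_rfl hζ.1) h1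
      · exact le_trans h2 (max_le hlohi hζ.2)
    simp only [hf, hKeq x hx']
  intro ξ hξ ξ' hξ'
  -- notation
  set m : ℝ := min (k ξ') ξ with hm
  have hkξ' : ξ' ≤ k ξ' := hk ξ' hξ'
  set g : ℝ → ℝ := fun x => (r - s) + (s - w) * G (k ξ' - x) with hg
  have hgcont : Continuous g := by fun_prop
  -- key identity: U (k ξ') (p ξ') ξ = Pi ξ' + ∫ x in ξ'..m, g x
  have hmaxm : max (k ξ' - ξ) 0 = k ξ' - m := by
    rcases le_total (k ξ') ξ with h | h
    · rw [hm, min_eq_left h, sub_self, max_eq_right (by linarith)]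
    · rw [hm, min_eq_right h, max_eq_left (by linarith)]
  have hkey : U (k ξ') (p ξ') ξ = Pi ξ' + ∫ x in ξ'..m, g x := by
    have hPi' : Pi ξ' = (r - w) * ξ' +
        (s - w) * (∫ u in (0:ℝ)..(k ξ' - ξ'), (1 - G u)) - p ξ' := by
      rw [hPi ξ', hU, min_eq_right hkξ', max_eq_left (by linarith)]
    have hUx : U (k ξ') (p ξ') ξ = (r - w) * m +
        (s - w) * (∫ u in (0:ℝ)..(k ξ' - m), (1 - G u)) - p ξ' := by
      rw [hU, hmaxm, hm, min_comm]
    have hint1 : IntervalIntegrable (fun u => 1 - G u) volume 0 (k ξ' - m) :=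
      (continuous_const.sub hGcont).intervalIntegrable _ _
    have hint2 : IntervalIntegrable (fun u => 1 - G u) volume 0 (k ξ' - ξ') :=
      (continuous_const.sub hGcont).intervalIntegrable _ _
    have hsub : (∫ u in (0:ℝ)..(k ξ' - m), (1 - G u)) -
        (∫ u in (0:ℝ)..(k ξ' - ξ'), (1 - G u)) =
        ∫ u in (k ξ' - ξ')..(k ξ' - m), (1 - G u) :=
      intervalIntegral.integral_interval_sub_left hint1 hint2
    have hcomp : (∫ x in m..ξ', (1 - G (k ξ' - x))) =
        ∫ u in (k ξ' - ξ')..(k ξ' - m), (1 - G u) :=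
      intervalIntegral.integral_comp_sub_left (fun u => 1 - G u) (k ξ')
    have hgc2 : Continuous (fun x : ℝ => G (k ξ' - x)) := by fun_prop
    have hsplit1 : (∫ x in m..ξ', (1 - G (k ξ' - x))) =
        (ξ' - m) - ∫ x in m..ξ', G (k ξ' - x) := by
      rw [intervalIntegral.integral_sub intervalIntegrable_const
        (hgc2.intervalIntegrable _ _)]
      simp
    have hsplit2 : (∫ x in ξ'..m, g x) =
        (r - s) * (m - ξ') + (s - w) * ∫ x in ξ'..m, G (k ξ' - x) := by
      simp only [hg]
      rw [intervalIntegral.integral_add intervalIntegrable_const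
        ((hgc2.intervalIntegrable _ _).const_mul _)]
      rw [intervalIntegral.integral_const, intervalIntegral.integral_const_mul]
      simp; ring
    have hrev : (∫ x in m..ξ', G (k ξ' - x)) = - ∫ x in ξ'..m, G (k ξ' - x) :=
      intervalIntegral.integral_symm ξ' m
    have hA : (∫ u in (0:ℝ)..(k ξ' - m), (1 - G u)) =
        (∫ u in (0:ℝ)..(k ξ' - ξ'), (1 - G u)) + (ξ' - m) +
          ∫ x in ξ'..m, G (k ξ' - x) := by
      have h1 := hcomp.trans hsub.symm
      linarith [hsplit1, hrev, h1]
    rw [hUx, hPi', hsplit2]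
    linear_combination (s - w) * hA
  -- now the inequality
  rw [hkey, ← hPi ξ, hPf ξ hξ, hPf ξ' hξ']
  have hadj : (∫ x in ξlo..ξ', f x) + (∫ x in ξ'..ξ, f x) = ∫ x in ξlo..ξ, f x :=
    intervalIntegral.integral_add_adjacent_intervals (hfint _ _ (left_mem_Icc.2 hlohi) hξ')
      (hfint _ _ hξ' hξ)
  have hmain : (∫ x in ξ'..m, g x) ≤ ∫ x in ξ'..ξ, f x := by
    rcases le_total ξ' ξ with hle | hle
    · -- ξ' ≤ ξ, so ξ' ≤ m ≤ ξ
      have hm1 : ξ' ≤ m := le_min hkξ' hle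
      have hm2 : m ≤ ξ := min_le_right _ _
      have hmmem : m ∈ Icc ξlo ξhi := ⟨le_trans hξ'.1 hm1, le_trans hm2 hξ.2⟩
      have hsplit : (∫ x in ξ'..m, f x) + (∫ x in m..ξ, f x) = ∫ x in ξ'..ξ, f x :=
        intervalIntegral.integral_add_adjacent_intervals (hfint _ _ hξ' hmmem)
          (hfint _ _ hmmem hξ)
      have h1 : (∫ x in ξ'..m, g x) ≤ ∫ x in ξ'..m, f x := by
        apply intervalIntegral.integral_mono_on hm1
          (hgcont.intervalIntegrable _ _) (hfint _ _ hξ' hmmem)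
        intro x hx
        have hx' : x ∈ Icc ξlo ξhi := ⟨le_trans hξ'.1 hx.1, le_trans hx.2 hmmem.2⟩
        have hkk : k ξ' ≤ k x := hkmono hξ' hx' hx.1
        have : G (k ξ' - x) ≤ G (K x - x) := by
          rw [hKeq x hx']; exact hGmono (by linarith)
        simp only [hf, hg]
        nlinarith [this]
      have h2 : (0:ℝ) ≤ ∫ x in m..ξ, f x := by
        apply intervalIntegral.integral_nonneg hm2
        intro x hx
        have hx' : x ∈ Icc ξlo ξhi := ⟨le_trans hmmem.1 hx.1, le_trans hx.2 hξ.2⟩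
        have hxk : x ≤ k x := hk x hx'
        have : (0:ℝ) ≤ G (K x - x) := by
          rw [hKeq x hx', ← hG0]; exact hGmono (by linarith)
        simp only [hf]
        nlinarith [this]
      linarith
    · -- ξ ≤ ξ', so m = ξ
      have hmeq : m = ξ := min_eq_right (le_trans hle hkξ')
      rw [hmeq, intervalIntegral.integral_symm ξ ξ',
        intervalIntegral.integral_symm ξ ξ', neg_le_neg_iff]
      apply intervalIntegral.integral_mono_on hle
        (hfint _ _ hξ hξ') (hgcont.intervalIntegrable _ _)
      intro x hx
      have hx' : x ∈ Icc ξlo ξhi := ⟨le_trans hξ.1 hx.1, le_trans hx.2 hξ'.2⟩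
      have hkk : k x ≤ k ξ' := hkmono hx' hξ' hx.2
      have : G (K x - x) ≤ G (k ξ' - x) := by
        rw [hKeq x hx']; exact hGmono (by linarith)
      simp only [hf, hg]
      nlinarith [this]
  linarith
end

section
/- Let the optimal reservation levels under the two contracts be defined implicitly by: s·(1−G(K_I−ξ)) − c − h(ξ)·(s−w)·g(K_I−ξ) = 0 and s·(1−G(K_II−ξ)) − c − h(ξ)·s·g(K_II−ξ) = 0, where h(ξ) = (1−F(ξ))/f(ξ) ≥ 0, and the centralized optimum K_c = ξ + G⁻¹((s−c)/s). Then K_II(ξ) ≤ K_I(ξ) ≤ K_c(ξ) for all ξ ∈ [ξ̲, ξ̄], with equalities when ξ = ξ̄ (where h(ξ̄) = 0). -/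
open MeasureTheory Set Filter

/-- Ordering of the contract reservation schedules: K_II(ξ) ≤ K_I(ξ) ≤ K_c(ξ) on
[ξ̲, ξ̄], with equality at ξ = ξ̄ where the virtual cost h(ξ̄) = 0. -/
theorem stmt14
    (s w c ξlo ξhi : ℝ) (G g Ginv h KI KII : ℝ → ℝ)
    (hc : 0 < c) (hcw : c < w) (hws : w < s) (hlohi : ξlo ≤ ξhi)
    (hGcont : Continuous G) (hGmono : StrictMonoOn G (Ici 0)) (hG0 : G 0 = 0)
    (hGlim : Tendsto G atTop (nhds 1))
    (hgd : ∀ t, 0 < t → HasDerivAt G (g t) t) (hgpos : ∀ t, 0 < t → 0 < g t)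
    (hGinv : ∀ y ∈ Ico (0:ℝ) 1, 0 ≤ Ginv y ∧ G (Ginv y) = y)
    (hh : ∀ ξ ∈ Icc ξlo ξhi, 0 ≤ h ξ) (hhtop : h ξhi = 0)
    (hKI : ∀ ξ ∈ Icc ξlo ξhi, ξ ≤ KI ξ ∧
      s * (1 - G (KI ξ - ξ)) - c - h ξ * (s - w) * g (KI ξ - ξ) = 0)
    (hKIuniq : ∀ ξ ∈ Icc ξlo ξhi, ∀ κ, ξ ≤ κ →
      s * (1 - G (κ - ξ)) - c - h ξ * (s - w) * g (κ - ξ) = 0 → κ = KI ξ)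
    (hKII : ∀ ξ ∈ Icc ξlo ξhi, ξ ≤ KII ξ ∧
      s * (1 - G (KII ξ - ξ)) - c - h ξ * s * g (KII ξ - ξ) = 0)
    (hKIIuniq : ∀ ξ ∈ Icc ξlo ξhi, ∀ κ, ξ ≤ κ →
      s * (1 - G (κ - ξ)) - c - h ξ * s * g (κ - ξ) = 0 → κ = KII ξ) :
    (∀ ξ ∈ Icc ξlo ξhi, KII ξ ≤ KI ξ ∧ KI ξ ≤ ξ + Ginv ((s - c) / s)) ∧
    KII ξhi = ξhi + Ginv ((s - c) / s) ∧ KI ξhi = ξhi + Ginv ((s - c) / s) := by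
  have hs : 0 < s := hc.trans (hcw.trans hws)
  have hsc : 0 < s - c := by linarith
  have hy0 : (0:ℝ) ≤ (s - c) / s := le_of_lt (div_pos hsc hs)
  have hy1 : (s - c) / s < 1 := by
    rw [div_lt_one hs]; linarith
  obtain ⟨hq0, hGq⟩ := hGinv ((s - c) / s) ⟨hy0, hy1⟩
  set q := Ginv ((s - c) / s) with hqdef
  have hGqval : s * (1 - G q) - c = 0 := by
    rw [hGq]; field_simp; ring
  have hhimem : ξhi ∈ Icc ξlo ξhi := ⟨hlohi, le_refl _⟩
  -- equality at ξhi
  have hKIhi : KI ξhi = ξhi + q := by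
    have := hKIuniq ξhi hhimem (ξhi + q) (by linarith)
      (by simp only [add_sub_cancel_left, hhtop]; rw [hGq]; field_simp; ring)
    exact this.symm
  have hKIIhi : KII ξhi = ξhi + q := by
    have := hKIIuniq ξhi hhimem (ξhi + q) (by linarith)
      (by simp only [add_sub_cancel_left, hhtop]; rw [hGq]; field_simp; ring)
    exact this.symm
  refine ⟨?_, hKIIhi, hKIhi⟩
  intro ξ hmem
  obtain ⟨hleI, heqI⟩ := hKI ξ hmem
  obtain ⟨hleII, heqII⟩ := hKII ξ hmem
  have hhξ := hh ξ hmem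
  constructor
  · -- KII ξ ≤ KI ξ
    rcases eq_or_lt_of_le hhξ with hh0 | hhpos
    · -- h ξ = 0 : the two equations coincide
      have : KII ξ = KI ξ := by
        apply hKIuniq ξ hmem (KII ξ) hleII
        rw [← hh0] at heqII ⊢
        simpa using heqII
      exact this.le
    · rcases eq_or_lt_of_le hleII with hII0 | hIIpos
      · -- KII ξ = ξ ≤ KI ξ
        rw [← hII0]; exact hleII.trans (hII0 ▸ hleI)
      · -- KII ξ > ξ : use Darboux's theorem on the FOC of contract I
        set t2 := KII ξ - ξ with ht2
        have ht2pos : 0 < t2 := by simp [ht2]; linarith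
        have hgt2 : 0 < g t2 := hgpos t2 ht2pos
        -- the FOC-I expression is positive at KII ξ
        have hposII : 0 < s * (1 - G t2) - c - h ξ * (s - w) * g t2 := by
          have : s * (1 - G t2) - c = h ξ * s * g t2 := by linarith [heqII]
          rw [this]
          have : h ξ * s * g t2 - h ξ * (s - w) * g t2 = h ξ * w * g t2 := by ring
          rw [this]
          have hw : 0 < w := hc.trans hcw
          positivity
        -- find M far out where the FOC-I expression is negative
        have hev : ∀ᶠ t in atTop, (s - c) / s < G t :=
          hGlim.eventually (eventually_gt_nhds hy1)
        obtain ⟨T, hT⟩ := hev.exists_forall_of_atTop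
        set M := max (KII ξ) (ξ + T) + 1 with hM
        have hMgtII : KII ξ < M := by
          have := le_max_left (KII ξ) (ξ + T); simp [hM]; linarith
        have hMξ : T ≤ M - ξ := by
          have := le_max_right (KII ξ) (ξ + T); simp [hM]; linarith
        have hMpos : 0 < M - ξ := by linarith
        have hnegM : s * (1 - G (M - ξ)) - c - h ξ * (s - w) * g (M - ξ) < 0 := by
          have h1 : (s - c) / s < G (M - ξ) := hT _ hMξ
          have h2 : s * (1 - G (M - ξ)) - c < 0 := by
            have := (div_lt_iff₀ hs).mp h1
            nlinarith
          have h3 : 0 ≤ h ξ * (s - w) * g (M - ξ) := by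
            have := (hgpos _ hMpos).le
            have hsw : (0:ℝ) ≤ s - w := by linarith
            positivity
          linarith
        -- antiderivative of the FOC-I expression
        set Φ : ℝ → ℝ := fun κ =>
          (s - c) * κ - s * (∫ t in (0:ℝ)..(κ - ξ), G t) - h ξ * (s - w) * G (κ - ξ) with hΦ
        set φ : ℝ → ℝ := fun κ =>
          s * (1 - G (κ - ξ)) - c - h ξ * (s - w) * g (κ - ξ) with hφ
        have hderiv : ∀ x ∈ Icc (KII ξ) M,
            HasDerivWithinAt Φ (φ x) (Icc (KII ξ) M) x := by
          intro x hx
          have hxξ : 0 < x - ξ := by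
            have := hx.1; simp only [ht2] at ht2pos; linarith
          have hsub : HasDerivAt (fun κ : ℝ => κ - ξ) 1 x := by
            simpa using (hasDerivAt_id x).sub_const ξ
          have hint : HasDerivAt (fun u => ∫ t in (0:ℝ)..u, G t) (G (x - ξ)) (x - ξ) :=
            intervalIntegral.integral_hasDerivAt_right
              (hGcont.intervalIntegrable _ _)
              (hGcont.stronglyMeasurableAtFilter _ _)
              hGcont.continuousAt
          have hint' : HasDerivAt (fun κ : ℝ => ∫ t in (0:ℝ)..(κ - ξ), G t)
              (G (x - ξ) * 1) x := by have := HasDerivAt.comp x hint hsub; exact this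
          have hG' : HasDerivAt (fun κ : ℝ => G (κ - ξ)) (g (x - ξ) * 1) x :=
            HasDerivAt.comp x (hgd _ hxξ) hsub
          have : HasDerivAt Φ
              ((s - c) * 1 - s * (G (x - ξ) * 1) - h ξ * (s - w) * (g (x - ξ) * 1)) x := by
            exact (((hasDerivAt_id x).const_mul (s - c)).sub
              (hint'.const_mul s)).sub (hG'.const_mul (h ξ * (s - w)))
          convert this.hasDerivWithinAt using 1
          show φ x = _; simp only [hφ]; ring
          all_goals rfl
        have hdar := exists_hasDerivWithinAt_eq_of_lt_of_gt hMgtII.le hderiv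
          (m := 0) (by simpa [hφ, ht2] using hposII) (by simpa [hφ] using hnegM)
        obtain ⟨κ, hκmem, hκ0⟩ := hdar
        have hκKI : κ = KI ξ := by
          apply hKIuniq ξ hmem κ (by linarith [hκmem.1])
          simpa [hφ] using hκ0
        linarith [hκmem.1]
  · -- KI ξ ≤ ξ + q
    rcases eq_or_lt_of_le hleI with h0 | hpos
    · rw [← h0]; linarith
    · have ht : 0 < KI ξ - ξ := by linarith
      have hg1 : 0 < g (KI ξ - ξ) := hgpos _ ht
      have hsw : (0:ℝ) ≤ s - w := by linarith
      have hnn : 0 ≤ h ξ * (s - w) * g (KI ξ - ξ) := by positivity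
      have hGle : G (KI ξ - ξ) ≤ G q := by
        rw [hGq]
        rw [le_div_iff₀ hs]
        nlinarith [heqI]
      have : KI ξ - ξ ≤ q := (hGmono.le_iff_le ht.le hq0).mp hGle
      linarith
end

section
/- In the optimal DB-bearing-risk contract, the marginal payment with respect to the reservation satisfies dP*/dK* = (s−w)·(1 − G(K*(ξ)−ξ)) ≥ 0; that is, the optimal payment P* is nondecreasing along the optimal reservation schedule K*. -/
open MeasureTheory Set Filter

/-- Optimal DB-bearing-risk contract: dP*/dK* = (s−w)(1 − G(K*(ξ)−ξ)) ≥ 0 along the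
optimal schedule, so the payment is nondecreasing. -/
theorem stmt15
    (r s w ξlo ξhi : ℝ) (G : ℝ → ℝ) (k k' p Pi : ℝ → ℝ)
    (hw : 0 < w) (hws : w < s) (hsr : s < r) (hlohi : ξlo ≤ ξhi)
    (hGcont : Continuous G) (hGmono : Monotone G) (hG0 : G 0 = 0)
    (hG1 : ∀ t, G t ≤ 1)
    (hkd : ∀ ξ, HasDerivAt k (k' ξ) ξ) (hk'pos : ∀ ξ, 0 < k' ξ)
    (hk : ∀ ξ, ξ ≤ k ξ)
    (hPid : ∀ ξ, HasDerivAt Pi ((r - s) + (s - w) * G (k ξ - ξ)) ξ)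
    (hp : ∀ ξ, p ξ = -Pi ξ + (r - w) * min (k ξ) ξ +
      (s - w) * ∫ u in (0:ℝ)..(max (k ξ - ξ) 0), (1 - G u)) :
    (∀ ξ ∈ Icc ξlo ξhi,
      HasDerivAt p ((s - w) * (1 - G (k ξ - ξ)) * k' ξ) ξ ∧
      0 ≤ (s - w) * (1 - G (k ξ - ξ))) ∧
    MonotoneOn p (Icc ξlo ξhi) := by
  set F : ℝ → ℝ := fun t => ∫ u in (0:ℝ)..t, (1 - G u) with hFdef
  have hcont : Continuous fun u => 1 - G u := continuous_const.sub hGcont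
  have hF : ∀ t, HasDerivAt F (1 - G t) t := by
    intro t
    exact intervalIntegral.integral_hasDerivAt_right
      (hcont.intervalIntegrable 0 t)
      (hcont.stronglyMeasurableAtFilter _ _)
      hcont.continuousAt
  have hpsimp : ∀ x, p x = -Pi x + (r - w) * x + (s - w) * F (k x - x) := by
    intro x
    rw [hp x, min_eq_right (hk x), max_eq_left (sub_nonneg.mpr (hk x))]
  have hd : ∀ ξ, HasDerivAt p ((s - w) * (1 - G (k ξ - ξ)) * k' ξ) ξ := by
    intro ξ
    have h1 : HasDerivAt (fun x => k x - x) (k' ξ - 1) ξ :=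
      (hkd ξ).sub (hasDerivAt_id ξ)
    have h2 : HasDerivAt (fun x => F (k x - x)) ((1 - G (k ξ - ξ)) * (k' ξ - 1)) ξ := by
      have h2' : HasDerivAt (F ∘ fun x => k x - x) ((1 - G (k ξ - ξ)) * (k' ξ - 1)) ξ :=
        HasDerivAt.comp ξ (hF (k ξ - ξ)) h1
      exact h2'
    have h3 : HasDerivAt (fun x => -Pi x + (r - w) * x + (s - w) * F (k x - x))
        (-((r - s) + (s - w) * G (k ξ - ξ)) + (r - w) * 1 +
          (s - w) * ((1 - G (k ξ - ξ)) * (k' ξ - 1))) ξ :=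
      (((hPid ξ).neg).add ((hasDerivAt_id ξ).const_mul (r - w))).add (h2.const_mul _)
    have heq : p = fun x => -Pi x + (r - w) * x + (s - w) * F (k x - x) :=
      funext hpsimp
    rw [heq]
    convert h3 using 1
    ring
  have hnn : ∀ ξ, 0 ≤ (s - w) * (1 - G (k ξ - ξ)) := fun ξ =>
    mul_nonneg (by linarith) (by linarith [hG1 (k ξ - ξ)])
  refine ⟨fun ξ _ => ⟨hd ξ, hnn ξ⟩, ?_⟩
  have hdiff : ∀ x, DifferentiableAt ℝ p x := fun x => (hd x).differentiableAt
  apply monotoneOn_of_deriv_nonneg (convex_Icc ξlo ξhi)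
    (fun x _ => (hdiff x).continuousAt.continuousWithinAt)
    (fun x _ => (hdiff x).differentiableWithinAt)
  intro x _
  rw [(hd x).deriv]
  exact mul_nonneg (hnn x) (hk'pos x).le
end

section
/- In the optimal WSD-bearing-risk contract, the marginal payment satisfies dP*/dK* = s·(1 − G(K*(ξ)−ξ)) − w, which is positive when G(K*(ξ)−ξ) < (s−w)/s and negative when G(K*(ξ)−ξ) > (s−w)/s; hence P* is non-monotone in K* (first increasing then decreasing) whenever G(K*(ξ)−ξ) crosses (s−w)/s. -/
open MeasureTheory Set Filter Topology

/-- Optimal WSD-bearing-risk contract: dP*/dK* = s(1 − G(K*(ξ)−ξ)) − w, which is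
positive when G(K*(ξ)−ξ) < (s−w)/s and negative when G(K*(ξ)−ξ) > (s−w)/s; hence P*
is non-monotone in K* whenever G(K*(ξ)−ξ) crosses (s−w)/s. -/
theorem stmt16
    (r s w ξlo ξhi : ℝ) (G : ℝ → ℝ) (k k' p Pi : ℝ → ℝ)
    (hw : 0 < w) (hws : w < s) (hsr : s < r) (hlohi : ξlo ≤ ξhi)
    (hGcont : Continuous G) (hGmono : Monotone G) (hG0 : G 0 = 0)
    (hG1 : ∀ t, G t ≤ 1)
    (hkd : ∀ ξ, HasDerivAt k (k' ξ) ξ) (hk'pos : ∀ ξ, 0 < k' ξ)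
    (hk : ∀ ξ, ξ ≤ k ξ)
    (hPid : ∀ ξ, HasDerivAt Pi ((r - s) + s * G (k ξ - ξ)) ξ)
    (hp : ∀ ξ, p ξ = -Pi ξ + r * min (k ξ) ξ +
      s * (∫ u in (0:ℝ)..(max (k ξ - ξ) 0), (1 - G u)) - w * k ξ) :
    (∀ ξ ∈ Icc ξlo ξhi,
      HasDerivAt p ((s * (1 - G (k ξ - ξ)) - w) * k' ξ) ξ ∧
      (G (k ξ - ξ) < (s - w) / s → 0 < s * (1 - G (k ξ - ξ)) - w) ∧
      ((s - w) / s < G (k ξ - ξ) → s * (1 - G (k ξ - ξ)) - w < 0)) ∧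
    ((∃ ξ₁ ∈ Icc ξlo ξhi, ∃ ξ₂ ∈ Icc ξlo ξhi, ξ₁ < ξ₂ ∧
        G (k ξ₁ - ξ₁) < (s - w) / s ∧ (s - w) / s < G (k ξ₂ - ξ₂)) →
      ¬ MonotoneOn p (Icc ξlo ξhi)) := by
  have hs : (0:ℝ) < s := hw.trans hws
  -- rewrite p explicitly
  have hp' : p = fun x => -Pi x + r * x +
      s * (∫ u in (0:ℝ)..(k x - x), (1 - G u)) - w * k x := by
    funext x
    rw [hp x, min_eq_right (hk x), max_eq_left (sub_nonneg.2 (hk x))]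
  have hderiv : ∀ ξ : ℝ,
      HasDerivAt p ((s * (1 - G (k ξ - ξ)) - w) * k' ξ) ξ := by
    intro ξ
    have hftc : HasDerivAt (fun y => ∫ u in (0:ℝ)..y, (1 - G u))
        (1 - G (k ξ - ξ)) (k ξ - ξ) :=
      ((continuous_const.sub hGcont).integral_hasStrictDerivAt 0 (k ξ - ξ)).hasDerivAt
    have hsub : HasDerivAt (fun x => k x - x) (k' ξ - 1) ξ :=
      (hkd ξ).sub (hasDerivAt_id ξ)
    have hcomp : HasDerivAt (fun x => ∫ u in (0:ℝ)..(k x - x), (1 - G u))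
        ((1 - G (k ξ - ξ)) * (k' ξ - 1)) ξ := by
      have := HasDerivAt.comp (x := ξ) (h := fun x => k x - x) hftc hsub
      exact this
    have H : HasDerivAt (fun x => -Pi x + r * x +
        s * (∫ u in (0:ℝ)..(k x - x), (1 - G u)) - w * k x)
        (-((r - s) + s * G (k ξ - ξ)) + r * 1 +
          s * ((1 - G (k ξ - ξ)) * (k' ξ - 1)) - w * k' ξ) ξ :=
      (((hPid ξ).neg.add ((hasDerivAt_id ξ).const_mul r)).add
        (hcomp.const_mul s)).sub ((hkd ξ).const_mul w)
    rw [hp']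
    convert H using 1
    ring
  constructor
  · intro ξ _
    refine ⟨hderiv ξ, ?_, ?_⟩
    · intro h
      have := (lt_div_iff₀ hs).1 h
      nlinarith
    · intro h
      have := (div_lt_iff₀ hs).1 h
      nlinarith
  · rintro ⟨ξ₁, hξ₁, ξ₂, hξ₂, hlt, h₁, h₂⟩ hmono
    -- derivative at ξ₂ is negative
    have hd2 : (s * (1 - G (k ξ₂ - ξ₂)) - w) * k' ξ₂ < 0 := by
      have := (div_lt_iff₀ hs).1 h₂
      have hk2 := hk'pos ξ₂
      nlinarith
    have htend := (hasDerivAt_iff_tendsto_slope.1 (hderiv ξ₂))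
    have hslope : ∀ᶠ x in 𝓝[<] ξ₂, slope p ξ₂ x < 0 := by
      have h1 : ∀ᶠ x in 𝓝[≠] ξ₂, slope p ξ₂ x < 0 :=
        htend (Iio_mem_nhds hd2)
      exact nhdsWithin_mono ξ₂ (fun x hx => ne_of_lt hx) h1
    have hnear : ∀ᶠ x in 𝓝[<] ξ₂, ξ₁ < x := by
      apply eventually_nhdsWithin_of_eventually_nhds
      exact eventually_gt_nhds hlt
    have hne : (𝓝[<] ξ₂).NeBot := by
      exact nhdsLT_neBot ξ₂
    obtain ⟨x, ⟨hx1, hx2⟩, hx3⟩ :=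
      ((hslope.and hnear).and eventually_mem_nhdsWithin).exists
    have hxlt : x < ξ₂ := hx3
    rw [slope_def_field] at hx1
    have hpx : p ξ₂ < p x := by
      rcases div_neg_iff.1 hx1 with ⟨h, _⟩ | ⟨_, h⟩
      · linarith
      · linarith
    have hxmem : x ∈ Icc ξlo ξhi := ⟨le_of_lt (lt_of_le_of_lt hξ₁.1 hx2), le_trans hxlt.le hξ₂.2⟩
    exact absurd (hmono hxmem hξ₂ hxlt.le) (not_le.2 hpx)
end
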